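/- Let G be a group, K a normal subgroup, and suppose K is G-finitely discriminable and the induced map G/K → Out(K) is injective. Then G is finitely discriminable. -/

import Mathlib

/-- A group `G` is finitely discriminable if there is a finite subset
`F ⊆ G \ {1}` such that every non-trivial normal subgroup of `G` contains an
element of `F`. -/
def FinDisc (G : Type*) [Group G] : Prop :=
  ∃ F : Finset G, (1 : G) ∉ F ∧ ∀ N : Subgroup G, N.Normal → N ≠ ⊥ → ∃ g ∈ F, g ∈ N

/-- A subgroup `H` of `G` is `G`-finitely discriminable if there is a finite set
`F ⊆ H \ {1}` such that every non-trivial subgroup of `H` that is normal in `G`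
contains an element of `F`. -/
def GFinDisc {G : Type*} [Group G] (H : Subgroup G) : Prop :=
  ∃ F : Finset G, (1 : G) ∉ F ∧ (∀ g ∈ F, g ∈ H) ∧
    ∀ N : Subgroup G, N.Normal → N ≤ H → N ≠ ⊥ → ∃ g ∈ F, g ∈ N

/-- If `K` is a normal subgroup of `G` which is `G`-finitely discriminable, and
the induced map `G/K → Out(K)` is injective (i.e. any `g ∈ G` acting on `K` by
conjugation as an inner automorphism of `K` lies in `K`), then `G` is finitely
discriminable. -/
theorem finDisc_of_out_injective {G : Type*} [Group G]
    (K : Subgroup G) (hK : K.Normal) (hfd : GFinDisc K)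
    (hout : ∀ g : G, (∃ k ∈ K, ∀ x ∈ K, g * x * g⁻¹ = k * x * k⁻¹) → g ∈ K) :
    FinDisc G := by
  obtain ⟨F, h1, hFK, hF⟩ := hfd
  refine ⟨F, h1, fun N hN hNbot => ?_⟩
  by_cases h : N ⊓ K = ⊥
  · exfalso
    apply hNbot
    rw [Subgroup.eq_bot_iff_forall]
    intro n hn
    have hnK : n ∈ K := by
      apply hout
      refine ⟨1, K.one_mem, fun x hx => ?_⟩
      have hc : n * x * n⁻¹ * x⁻¹ ∈ N ⊓ K := by
        constructor
        · have h2 : x * n⁻¹ * x⁻¹ ∈ N := hN.conj_mem _ (N.inv_mem hn) x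
          have := N.mul_mem hn h2
          show n * x * n⁻¹ * x⁻¹ ∈ N
          convert this using 1
          group
        · have h2 : n * x * n⁻¹ ∈ K := hK.conj_mem _ hx n
          exact K.mul_mem h2 (K.inv_mem hx)
      rw [h, Subgroup.mem_bot] at hc
      have : n * x * n⁻¹ = x := by
        have := congrArg (· * x) hc
        simpa [mul_assoc] using this
      simpa using this
    have : n ∈ N ⊓ K := ⟨hn, hnK⟩
    rw [h, Subgroup.mem_bot] at this
    exact this
  · have hnorm : (N ⊓ K).Normal :=
      ⟨fun n hn g => ⟨hN.conj_mem _ hn.1 g, hK.conj_mem _ hn.2 g⟩⟩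
    obtain ⟨g, hgF, hgN⟩ := hF (N ⊓ K) hnorm inf_le_right h
    exact ⟨g, hgF, hgN.1⟩
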